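/- Let P and Φ be K×K real matrices with P symmetric positive definite and P − ΦᵀPΦ positive semidefinite. Then for all x ∈ ℝ^K, (Φx)ᵀP(Φx) ≤ [(λmax(P) − λmin(P − ΦᵀPΦ))/λmax(P)] · xᵀPx, and the coefficient (λmax(P) − λmin(P − ΦᵀPΦ))/λmax(P) lies in [0,1]. If P − ΦᵀPΦ is positive definite, the coefficient lies in [0,1). -/

import Mathlib

open Matrix

noncomputable section

lemma quad_decomp {K : ℕ} (A : Matrix (Fin K) (Fin K) ℝ) (hA : A.IsHermitian)
    (x : Fin K → ℝ) :
    x ⬝ᵥ A *ᵥ x = ∑ i, hA.eigenvalues i * ((star (hA.eigenvectorUnitary : Matrix (Fin K) (Fin K) ℝ) *ᵥ x) i)^2 := by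
  set U : Matrix (Fin K) (Fin K) ℝ := (hA.eigenvectorUnitary : Matrix (Fin K) (Fin K) ℝ) with hU
  set D : Matrix (Fin K) (Fin K) ℝ := diagonal (RCLike.ofReal ∘ hA.eigenvalues) with hD
  set y := star U *ᵥ x with hy
  have hsU : star U = Uᵀ := by
    ext i j; simp [star]
  have h1 : A *ᵥ x = U *ᵥ (D *ᵥ y) := by
    conv_lhs => rw [hA.spectral_theorem]
    rw [Unitary.conjStarAlgAut_apply]
    rw [hy, mulVec_mulVec, mulVec_mulVec]
  have h2 : x ⬝ᵥ (U *ᵥ (D *ᵥ y)) = y ⬝ᵥ (D *ᵥ y) := by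
    rw [dotProduct_mulVec, hy, hsU, mulVec_transpose]
  rw [h1, h2]
  simp only [hD, dotProduct, mulVec_diagonal, Function.comp_apply, RCLike.ofReal_real_eq_id,
    id_eq]
  exact Finset.sum_congr rfl fun i _ => by ring

lemma norm_decomp {K : ℕ} (A : Matrix (Fin K) (Fin K) ℝ) (hA : A.IsHermitian)
    (x : Fin K → ℝ) :
    x ⬝ᵥ x = ∑ i, ((star (hA.eigenvectorUnitary : Matrix (Fin K) (Fin K) ℝ) *ᵥ x) i)^2 := by
  set U : Matrix (Fin K) (Fin K) ℝ := (hA.eigenvectorUnitary : Matrix (Fin K) (Fin K) ℝ) with hU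
  set y := star U *ᵥ x with hy
  have hsU : star U = Uᵀ := by ext i j; simp [star]
  have h : y ⬝ᵥ y = x ⬝ᵥ x := by
    rw [hy, dotProduct_mulVec]
    have h2 : (star U *ᵥ x) ᵥ* star U = (U * star U) *ᵥ x := by
      rw [← mulVec_transpose, hsU, transpose_transpose, mulVec_mulVec]
    rw [h2, (Matrix.mem_unitaryGroup_iff).mp hA.eigenvectorUnitary.2, one_mulVec]
  rw [← h]
  simp [dotProduct, sq]

lemma quad_le {K : ℕ} (A : Matrix (Fin K) (Fin K) ℝ) (hA : A.IsHermitian) (c : ℝ)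
    (hc : ∀ i, hA.eigenvalues i ≤ c) (x : Fin K → ℝ) :
    x ⬝ᵥ A *ᵥ x ≤ c * (x ⬝ᵥ x) := by
  rw [quad_decomp A hA x, norm_decomp A hA x, Finset.mul_sum]
  exact Finset.sum_le_sum fun i _ => mul_le_mul_of_nonneg_right (hc i) (sq_nonneg _)

lemma quad_ge {K : ℕ} (A : Matrix (Fin K) (Fin K) ℝ) (hA : A.IsHermitian) (c : ℝ)
    (hc : ∀ i, c ≤ hA.eigenvalues i) (x : Fin K → ℝ) :
    c * (x ⬝ᵥ x) ≤ x ⬝ᵥ A *ᵥ x := by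
  rw [quad_decomp A hA x, norm_decomp A hA x, Finset.mul_sum]
  exact Finset.sum_le_sum fun i _ => mul_le_mul_of_nonneg_right (hc i) (sq_nonneg _)
theorem stmt4 {K : ℕ} (P Φ : Matrix (Fin K) (Fin K) ℝ)
    (hP : P.PosDef) (hPsd : (P - Φᵀ * P * Φ).PosSemidef)
    (lmax lmin : ℝ)
    (hlmax : IsGreatest (Set.range hP.1.eigenvalues) lmax)
    (hlmin : IsLeast (Set.range hPsd.1.eigenvalues) lmin) :
    (∀ x : Fin K → ℝ,
      (Φ.mulVec x) ⬝ᵥ P.mulVec (Φ.mulVec x) ≤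
        ((lmax - lmin) / lmax) * (x ⬝ᵥ P.mulVec x)) ∧
    (lmax - lmin) / lmax ∈ Set.Icc (0:ℝ) 1 ∧
    ((P - Φᵀ * P * Φ).PosDef → (lmax - lmin) / lmax ∈ Set.Ico (0:ℝ) 1) := by
  obtain ⟨i0, hi0⟩ := hlmax.1
  have hlmax_pos : 0 < lmax := hi0 ▸ hP.eigenvalues_pos i0
  have hlmin_nonneg : 0 ≤ lmin := by
    obtain ⟨j, hj⟩ := hlmin.1; exact hj ▸ hPsd.eigenvalues_nonneg j
  have hub : ∀ i, hP.1.eigenvalues i ≤ lmax := fun i => hlmax.2 ⟨i, rfl⟩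
  have hlb : ∀ i, lmin ≤ hPsd.1.eigenvalues i := fun i => hlmin.2 ⟨i, rfl⟩
  have hkey : ∀ x : Fin K → ℝ, x ⬝ᵥ (P - Φᵀ * P * Φ) *ᵥ x
      = x ⬝ᵥ P *ᵥ x - (Φ *ᵥ x) ⬝ᵥ P *ᵥ (Φ *ᵥ x) := by
    intro x
    have h1 : x ⬝ᵥ (Φᵀ * P * Φ) *ᵥ x = (Φ *ᵥ x) ⬝ᵥ P *ᵥ (Φ *ᵥ x) := by
      rw [← mulVec_mulVec, dotProduct_mulVec, ← vecMul_vecMul, vecMul_transpose,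
        ← dotProduct_mulVec]
    rw [sub_mulVec, dotProduct_sub, h1]
  have hc : (lmax - lmin) / lmax * lmax = lmax - lmin := div_mul_cancel₀ _ hlmax_pos.ne'
  have hPnn : ∀ y : Fin K → ℝ, 0 ≤ y ⬝ᵥ P *ᵥ y := by
    intro y
    simpa using hP.posSemidef.re_dotProduct_nonneg y
  have hle : ∀ x : Fin K → ℝ,
      (Φ.mulVec x) ⬝ᵥ P.mulVec (Φ.mulVec x) ≤
        ((lmax - lmin) / lmax) * (x ⬝ᵥ P.mulVec x) := by
    intro x
    have e1 : lmin * (x ⬝ᵥ x) ≤ x ⬝ᵥ (P - Φᵀ * P * Φ) *ᵥ x :=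
      quad_ge _ hPsd.1 lmin hlb x
    have e2 : x ⬝ᵥ P *ᵥ x ≤ lmax * (x ⬝ᵥ x) := quad_le P hP.1 lmax hub x
    rw [hkey x] at e1
    rw [div_mul_eq_mul_div, le_div_iff₀ hlmax_pos]
    nlinarith [mul_le_mul_of_nonneg_left e2 hlmin_nonneg,
      mul_le_mul_of_nonneg_left e1 hlmax_pos.le]
  have hminmax : lmin ≤ lmax := by
    set v : Fin K → ℝ := Pi.single i0 1 with hv
    have hvv : v ⬝ᵥ v = 1 := by simp [hv, dotProduct, Pi.single_apply]
    have e1 : lmin * (v ⬝ᵥ v) ≤ v ⬝ᵥ (P - Φᵀ * P * Φ) *ᵥ v :=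
      quad_ge _ hPsd.1 lmin hlb v
    have e2 : v ⬝ᵥ P *ᵥ v ≤ lmax * (v ⬝ᵥ v) := quad_le P hP.1 lmax hub v
    have e3 := hkey v
    have e4 := hPnn (Φ *ᵥ v)
    rw [hvv] at e1 e2
    linarith
  refine ⟨hle, ⟨div_nonneg (by linarith) hlmax_pos.le,
      (div_le_one hlmax_pos).mpr (by linarith)⟩, fun hpd => ?_⟩
  have hlmin_pos : 0 < lmin := by
    obtain ⟨j, hj⟩ := hlmin.1; exact hj ▸ hpd.eigenvalues_pos j
  exact ⟨div_nonneg (by linarith) hlmax_pos.le,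
    (div_lt_one hlmax_pos).mpr (by linarith)⟩
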